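/- Let $n\ge 2$ affine contractions $S_1,\dots,S_n$ map $(0,1)$ onto pairwise disjoint subintervals $I_1,\dots,I_n$ of $(0,1)$ with $\sum_j |I_j| < 1$, and let $\alpha\in(0,1)$ be the unique solution of $\sum_{j=1}^n |I_j|^\alpha = 1$. Given weights $\mathfrak r_j>0$, $\sum_j\mathfrak r_j = 1$, let $p>1$ be the unique solution of $\sum_{j=1}^n (\mathfrak r_j |I_j|^{2\ell-1})^{1/p} = 1$ for a fixed integer $\ell\ge 1$, and set $\gamma = (2\ell-1)/(p-1)$. Then $\gamma \le \alpha$, with equality if and only if $\mathfrak r_j = |I_j|^\alpha$ for all $j$. -/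

import Mathlib

set_option autoImplicit false

open Set

/-- Strict weighted AM–GM for two numbers. -/
lemma amgm_strict' {a b θ : ℝ} (ha : 0 < a) (hb : 0 < b) (hθ : 0 < θ) (hθ1 : θ < 1)
    (hne : a ≠ b) : a ^ θ * b ^ (1 - θ) < θ * a + (1 - θ) * b := by
  have h := strictConcaveOn_log_Ioi.2 (Set.mem_Ioi.2 ha) (Set.mem_Ioi.2 hb) hne hθ
    (sub_pos.2 hθ1) (by ring)
  simp only [smul_eq_mul] at h
  have key : a ^ θ * b ^ (1 - θ) = Real.exp (θ * Real.log a + (1 - θ) * Real.log b) := by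
    rw [Real.exp_add, Real.rpow_def_of_pos ha, Real.rpow_def_of_pos hb,
      mul_comm (Real.log a) θ, mul_comm (Real.log b) (1 - θ)]
  rw [key]
  have hpos : 0 < θ * a + (1 - θ) * b :=
    add_pos (mul_pos hθ ha) (mul_pos (sub_pos.2 hθ1) hb)
  calc Real.exp (θ * Real.log a + (1 - θ) * Real.log b)
      < Real.exp (Real.log (θ * a + (1 - θ) * b)) := Real.exp_lt_exp.2 h
    _ = θ * a + (1 - θ) * b := Real.exp_log hpos

/-- Weighted AM–GM (non-strict). -/
lemma amgm_le' {a b θ : ℝ} (ha : 0 ≤ a) (hb : 0 ≤ b) (hθ : 0 ≤ θ) (hθ1 : θ ≤ 1) :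
    a ^ θ * b ^ (1 - θ) ≤ θ * a + (1 - θ) * b :=
  Real.geom_mean_le_arith_mean2_weighted hθ (by linarith) ha hb (by ring)

/-- **Spectral dimension vs. Hausdorff dimension of a self-similar measure**
(Nazarov). -/
theorem spectral_dimension_le_hausdorff_dimension
    (n : ℕ) (hn : 2 ≤ n) (ℓ : ℕ) (hℓ : 1 ≤ ℓ)
    (c L : Fin n → ℝ) (hL : ∀ j, 0 < L j)
    (hsub : ∀ j, Ioo (c j) (c j + L j) ⊆ Ioo (0:ℝ) 1)
    (hdisj : Pairwise fun i j => Disjoint (Ioo (c i) (c i + L i)) (Ioo (c j) (c j + L j)))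
    (hLsum : (∑ j, L j) < 1)
    (α : ℝ) (hα : α ∈ Ioo (0:ℝ) 1) (hαeq : (∑ j, L j ^ α) = 1)
    (r : Fin n → ℝ) (hr : ∀ j, 0 < r j) (hrsum : (∑ j, r j) = 1)
    (p : ℝ) (hp : 1 < p)
    (hpeq : (∑ j, (r j * L j ^ (2 * ℓ - 1 : ℕ)) ^ (1 / p)) = 1)
    (γ : ℝ) (hγ : γ = ((2 * ℓ - 1 : ℕ) : ℝ) / (p - 1)) :
    γ ≤ α ∧ (γ = α ↔ ∀ j, r j = L j ^ α) := by
  obtain ⟨hα0, hα1⟩ := hα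
  set m : ℕ := 2 * ℓ - 1 with hm_def
  have hm1 : 1 ≤ m := by omega
  set M : ℝ := (m : ℝ) with hM_def
  have hM1 : (1:ℝ) ≤ M := by rw [hM_def]; exact_mod_cast hm1
  have hM0 : 0 < M := by linarith
  -- basic facts
  have hne : (Finset.univ : Finset (Fin n)).Nonempty := by
    have : 0 < n := by omega
    have : Nonempty (Fin n) := Fin.pos_iff_nonempty.mp this
    exact Finset.univ_nonempty
  have hL1 : ∀ j, L j < 1 := by
    intro j
    have : L j ≤ ∑ i, L i :=
      Finset.single_le_sum (fun i _ => (hL i).le) (Finset.mem_univ j)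
    linarith
  have hr1 : ∀ j, r j ≤ 1 := by
    intro j
    have : r j ≤ ∑ i, r i :=
      Finset.single_le_sum (fun i _ => (hr i).le) (Finset.mem_univ j)
    linarith
  -- the base x j = r j * L j ^ m lies in (0,1)
  set x : Fin n → ℝ := fun j => r j * L j ^ m with hx_def
  have hx0 : ∀ j, 0 < x j := fun j => mul_pos (hr j) (pow_pos (hL j) m)
  have hx1 : ∀ j, x j < 1 := by
    intro j
    have h1 : L j ^ m < 1 := pow_lt_one₀ (hL j).le (hL1 j) (by omega)
    calc x j ≤ 1 * L j ^ m :=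
        mul_le_mul_of_nonneg_right (hr1 j) (pow_pos (hL j) m).le
      _ < 1 := by simpa using h1
  -- the strictly monotone function f
  set f : ℝ → ℝ := fun s => ∑ j, x j ^ (1 / s) with hf_def
  have hfmono : StrictMonoOn f (Ioi (0:ℝ)) := by
    intro s hs t ht hst
    apply Finset.sum_lt_sum_of_nonempty hne
    intro j _
    exact Real.rpow_lt_rpow_of_exponent_gt (hx0 j) (hx1 j)
      (one_div_lt_one_div_of_lt hs hst)
  -- p₀ and θ
  set p₀ : ℝ := (α + M) / α with hp₀_def
  have hαM : 0 < α + M := by linarith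
  have hp₀1 : 1 < p₀ := by
    rw [hp₀_def, lt_div_iff₀ hα0]; linarith
  set θ : ℝ := α / (α + M) with hθ_def
  have hθ_eq : 1 / p₀ = θ := by
    rw [hp₀_def, one_div_div]
  have hθ0 : 0 < θ := div_pos hα0 hαM
  have hθ1 : θ < 1 := by
    rw [hθ_def, div_lt_one hαM]; linarith
  have h1θ : 1 - θ = M / (α + M) := by
    rw [hθ_def]; field_simp; ring
  -- key identity: x j ^ θ = r j ^ θ * (L j ^ α) ^ (1 - θ)
  have hkey : ∀ j, x j ^ θ = r j ^ θ * (L j ^ α) ^ (1 - θ) := by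
    intro j
    have hLj := (hL j).le
    rw [hx_def]
    rw [Real.mul_rpow (hr j).le (pow_nonneg hLj m),
      ← Real.rpow_natCast (L j) m, ← Real.rpow_mul hLj, ← Real.rpow_mul hLj]
    congr 1
    rw [h1θ, hθ_def, hM_def]
    ring
  -- the value f p₀ = ∑ x j ^ θ
  have hfp₀ : f p₀ = ∑ j, r j ^ θ * (L j ^ α) ^ (1 - θ) := by
    rw [hf_def]
    simp only [hθ_eq]
    exact Finset.sum_congr rfl fun j _ => hkey j
  have hfp : f p = 1 := hpeq
  have hp₀mem : p₀ ∈ Ioi (0:ℝ) := by simp; linarith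
  have hpmem : p ∈ Ioi (0:ℝ) := by simp; linarith
  -- relation between γ and p₀ vs p
  have hγ_eq : γ = M / (p - 1) := hγ
  have hp1 : 0 < p - 1 := by linarith
  have hγ_iff_le : p₀ ≤ p → γ ≤ α := by
    intro h
    rw [hγ_eq, div_le_iff₀ hp1]
    have : (α + M) / α ≤ p := h
    rw [div_le_iff₀ hα0] at this
    nlinarith
  have hγ_iff_lt : p₀ < p → γ < α := by
    intro h
    rw [hγ_eq, div_lt_iff₀ hp1]
    have : (α + M) / α < p := h
    rw [div_lt_iff₀ hα0] at this
    nlinarith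
  have hγ_of_eq : p₀ = p → γ = α := by
    intro h
    rw [hγ_eq, ← h, hp₀_def]
    field_simp
    rw [add_sub_cancel_left, div_self hM0.ne']
  -- Case 1: r = L ^ α
  by_cases hcase : ∀ j, r j = L j ^ α
  · have hS : f p₀ = 1 := by
      rw [hfp₀]
      have : ∀ j, r j ^ θ * (L j ^ α) ^ (1 - θ) = r j := by
        intro j
        rw [hcase j, ← Real.rpow_add (Real.rpow_pos_of_pos (hL j) α)]
        simp
      rw [Finset.sum_congr rfl fun j _ => this j, hrsum]
    have hpp : p₀ = p := hfmono.injOn hp₀mem hpmem (hS.trans hfp.symm)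
    have := hγ_of_eq hpp
    exact ⟨this.le, by simp [this, hcase]⟩
  · -- Case 2: some r j ≠ L j ^ α; then f p₀ < 1
    push_neg at hcase
    obtain ⟨j₀, hj₀⟩ := hcase
    have hS : f p₀ < 1 := by
      rw [hfp₀]
      have hle : ∀ j ∈ Finset.univ, r j ^ θ * (L j ^ α) ^ (1 - θ)
          ≤ θ * r j + (1 - θ) * L j ^ α := fun j _ =>
        amgm_le' (hr j).le (Real.rpow_pos_of_pos (hL j) α).le hθ0.le hθ1.le
      have hlt : ∃ j ∈ Finset.univ, r j ^ θ * (L j ^ α) ^ (1 - θ)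
          < θ * r j + (1 - θ) * L j ^ α :=
        ⟨j₀, Finset.mem_univ j₀,
          amgm_strict' (hr j₀) (Real.rpow_pos_of_pos (hL j₀) α) hθ0 hθ1 hj₀⟩
      calc (∑ j, r j ^ θ * (L j ^ α) ^ (1 - θ))
          < ∑ j, (θ * r j + (1 - θ) * L j ^ α) := Finset.sum_lt_sum hle hlt
        _ = θ * (∑ j, r j) + (1 - θ) * (∑ j, L j ^ α) := by
            rw [Finset.sum_add_distrib, ← Finset.mul_sum, ← Finset.mul_sum]
        _ = 1 := by rw [hrsum, hαeq]; ring
    have hpp : p₀ < p :=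
      (hfmono.lt_iff_lt hp₀mem hpmem).1 (by rw [hfp]; exact hS)
    have hlt := hγ_iff_lt hpp
    refine ⟨hlt.le, ?_⟩
    constructor
    · intro h; exact absurd h hlt.ne
    · intro h; exact absurd (h j₀) hj₀
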